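/- For p = 2, q = 1, b > 0 and λ > λ₀ := 2√b ‖W₂‖₂, the functions u_i(x) = ((λ‖W₂‖₂^(-1) ∓ sqrt(λ²‖W₂‖₂^(-2) - 4b))/2) ‖W₂‖₂^(-1) W₂(x) (i = 1,2) each solve -(∫₀¹ u² dx + b) u'' = λ u² on (0,1) with u(0)=u(1)=0, where W₂ is the positive solution of -W'' = W² with Dirichlet conditions on (0,1). -/

import Mathlib

open Real Set

theorem stmt19 (b lam : ℝ) (hb : 0 < b)
    (W W' W'' : ℝ → ℝ)
    (hW' : ∀ x ∈ Icc (0:ℝ) 1, HasDerivAt W (W' x) x)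
    (hW'' : ∀ x ∈ Icc (0:ℝ) 1, HasDerivAt W' (W'' x) x)
    (hODE : ∀ x ∈ Ioo (0:ℝ) 1, -W'' x = (W x) ^ 2)
    (hpos : ∀ x ∈ Ioo (0:ℝ) 1, 0 < W x)
    (hb0 : W 0 = 0) (hb1 : W 1 = 0)
    (n : ℝ) (hn : n = (∫ x in (0:ℝ)..1, (W x) ^ 2) ^ ((1:ℝ)/2))
    (hlam : lam > 2 * Real.sqrt b * n)
    (t₁ t₂ : ℝ)
    (ht₁ : t₁ = (lam * n⁻¹ - Real.sqrt (lam ^ 2 * n⁻¹ ^ 2 - 4 * b)) / 2)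
    (ht₂ : t₂ = (lam * n⁻¹ + Real.sqrt (lam ^ 2 * n⁻¹ ^ 2 - 4 * b)) / 2)
    (u₁ u₂ : ℝ → ℝ)
    (hu₁ : ∀ x, u₁ x = t₁ * n⁻¹ * W x)
    (hu₂ : ∀ x, u₂ x = t₂ * n⁻¹ * W x) :
    (∀ x ∈ Ioo (0:ℝ) 1,
      -(((∫ y in (0:ℝ)..1, (u₁ y) ^ 2) + b) * (t₁ * n⁻¹ * W'' x)) =
        lam * (u₁ x) ^ 2) ∧
    (∀ x ∈ Ioo (0:ℝ) 1,
      -(((∫ y in (0:ℝ)..1, (u₂ y) ^ 2) + b) * (t₂ * n⁻¹ * W'' x)) =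
        lam * (u₂ x) ^ 2) ∧
    u₁ 0 = 0 ∧ u₁ 1 = 0 ∧ u₂ 0 = 0 ∧ u₂ 1 = 0 := by
  have hWc : ContinuousOn W (Icc 0 1) :=
    fun x hx => ((hW' x hx).continuousAt).continuousWithinAt
  have hInt : IntervalIntegrable (fun x => W x ^ 2) MeasureTheory.volume 0 1 := by
    apply ContinuousOn.intervalIntegrable
    rw [uIcc_of_le (by norm_num : (0:ℝ) ≤ 1)]
    exact hWc.pow 2
  set I := ∫ x in (0:ℝ)..1, W x ^ 2 with hI
  have hIpos : 0 < I :=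
    intervalIntegral.intervalIntegral_pos_of_pos_on hInt
      (fun x hx => pow_pos (hpos x hx) 2) (by norm_num)
  have hns : n = Real.sqrt I := by rw [hn, Real.sqrt_eq_rpow]
  have hnpos : 0 < n := hns ▸ Real.sqrt_pos.mpr hIpos
  have hn2 : n ^ 2 = I := by rw [hns]; exact Real.sq_sqrt hIpos.le
  have hnne : n ≠ 0 := hnpos.ne'
  have hs : 2 * Real.sqrt b < lam * n⁻¹ := by
    have := (lt_div_iff₀ hnpos).mpr hlam
    rwa [div_eq_mul_inv] at this
  have hdisc : 0 ≤ lam ^ 2 * n⁻¹ ^ 2 - 4 * b := by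
    nlinarith [Real.sq_sqrt hb.le, Real.sqrt_nonneg b, hs]
  have hd2 : Real.sqrt (lam ^ 2 * n⁻¹ ^ 2 - 4 * b) ^ 2 = lam ^ 2 * n⁻¹ ^ 2 - 4 * b :=
    Real.sq_sqrt hdisc
  have hr1 : t₁ ^ 2 - lam * n⁻¹ * t₁ + b = 0 := by
    subst ht₁; linear_combination hd2 / 4
  have hr2 : t₂ ^ 2 - lam * n⁻¹ * t₂ + b = 0 := by
    subst ht₂; linear_combination hd2 / 4
  have main : ∀ t : ℝ, t ^ 2 - lam * n⁻¹ * t + b = 0 → ∀ x ∈ Ioo (0:ℝ) 1,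
      -(((∫ y in (0:ℝ)..1, (t * n⁻¹ * W y) ^ 2) + b) * (t * n⁻¹ * W'' x)) =
        lam * (t * n⁻¹ * W x) ^ 2 := by
    intro t ht x hx
    have hint : (∫ y in (0:ℝ)..1, (t * n⁻¹ * W y) ^ 2) = t ^ 2 * n⁻¹ ^ 2 * I := by
      have h : ∀ y : ℝ, (t * n⁻¹ * W y) ^ 2 = (t ^ 2 * n⁻¹ ^ 2) * W y ^ 2 :=
        fun y => by ring
      simp_rw [h]
      rw [intervalIntegral.integral_const_mul]
    have hW2 : W'' x = -(W x) ^ 2 := by have := hODE x hx; linarith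
    have ht' : t ^ 2 * n + b * n = lam * t := by
      have h : (t ^ 2 - lam * n⁻¹ * t + b) * n = 0 := by rw [ht]; ring
      field_simp at h
      linarith
    rw [hint, hW2, ← hn2]
    field_simp
    linear_combination (t * W x ^ 2) * ht'
  refine ⟨fun x hx => ?_, fun x hx => ?_, ?_, ?_, ?_, ?_⟩
  · simp only [hu₁]; exact main t₁ hr1 x hx
  · simp only [hu₂]; exact main t₂ hr2 x hx
  · simp [hu₁, hb0]
  · simp [hu₁, hb1]
  · simp [hu₂, hb0]
  · simp [hu₂, hb1]
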